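/- For a min-plus matrix A ∈ ℝ_min^{n×n} whose associated directed graph contains at least one circuit, the minimum over all circuits C of the average weight ω(C)/ℓ(C) is an eigenvalue of A in the min-plus sense. -/

import Mathlib

open Finset

/-- `w` is the average weight of some circuit (a closed path with pairwise
distinct intermediate vertices) in the network of the min-plus matrix `A`. -/
def IsCircuitAvg {n : ℕ} (A : Matrix (Fin n) (Fin n) (WithTop ℝ)) (w : ℝ) : Prop :=
  ∃ (s : ℕ) (f : ℕ → Fin n), 0 < s ∧ f s = f 0 ∧
    (∀ k l, k < s → l < s → f k = f l → k = l) ∧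
    ∑ k ∈ range s, A (f k) (f (k + 1)) = (((s : ℝ) * w : ℝ) : WithTop ℝ)

namespace MinPlusAux

variable {n : ℕ}

/-- weight of the length-`m` walk `f` in the matrix `B`. -/
def wt (B : Matrix (Fin n) (Fin n) (WithTop ℝ)) (f : ℕ → Fin n) (m : ℕ) : WithTop ℝ :=
  ∑ k ∈ range m, B (f k) (f (k + 1))

/-- minimal weight of length-`m` walks ending at `v0`, as a Bellman recursion. -/
def y (B : Matrix (Fin n) (Fin n) (WithTop ℝ)) (v0 : Fin n) : ℕ → Fin n → WithTop ℝ
  | 0 => fun j => if j = v0 then 0 else ⊤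
  | (m + 1) => fun i => univ.inf (fun j => B i j + y B v0 m j)

/-- the "normalized" matrix `A - lam`. -/
def Bm (A : Matrix (Fin n) (Fin n) (WithTop ℝ)) (lam : ℝ) :
    Matrix (Fin n) (Fin n) (WithTop ℝ) :=
  fun i j => A i j + ((-lam : ℝ) : WithTop ℝ)

/-- the candidate eigenvector. -/
def dvec (A : Matrix (Fin n) (Fin n) (WithTop ℝ)) (lam : ℝ) (v0 : Fin n) (i : Fin n) :
    WithTop ℝ :=
  (Icc 1 n).inf (fun m => y (Bm A lam) v0 m i)

lemma inf_const_add {α : Type*} (c : WithTop ℝ) (s : Finset α) (hs : s.Nonempty)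
    (f : α → WithTop ℝ) : s.inf (fun j => c + f j) = c + s.inf f := by
  apply le_antisymm
  · obtain ⟨j, hj, hji⟩ := s.exists_mem_eq_inf hs f
    rw [hji]
    exact Finset.inf_le hj
  · obtain ⟨j, hj, hji⟩ := s.exists_mem_eq_inf hs (fun j => c + f j)
    rw [hji]
    exact add_le_add_right (Finset.inf_le hj) c

/-- lower bound: `y` is below the weight of every walk ending at `v0`. -/
lemma y_le_wt (B : Matrix (Fin n) (Fin n) (WithTop ℝ)) (v0 : Fin n) :
    ∀ m (f : ℕ → Fin n), f m = v0 → y B v0 m (f 0) ≤ wt B f m := by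
  intro m
  induction m with
  | zero => intro f hf; simp [y, hf, wt]
  | succ m ih =>
      intro f hf
      have hw : wt B f (m + 1) = B (f 0) (f 1) + wt B (fun t => f (t + 1)) m := by
        simp only [wt, Finset.sum_range_succ' (fun k => B (f k) (f (k + 1))) m]
        exact add_comm _ _
      have h2 : y B v0 m (f 1) ≤ wt B (fun t => f (t + 1)) m := ih (fun t => f (t + 1)) hf
      calc y B v0 (m + 1) (f 0) ≤ B (f 0) (f 1) + y B v0 m (f 1) :=
            Finset.inf_le (Finset.mem_univ (f 1))
        _ ≤ B (f 0) (f 1) + wt B (fun t => f (t + 1)) m := add_le_add_right h2 _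
        _ = wt B f (m + 1) := hw.symm

/-- attainment for positive lengths. -/
lemma y_attained (B : Matrix (Fin n) (Fin n) (WithTop ℝ)) (v0 : Fin n) :
    ∀ m (i : Fin n), ∃ f : ℕ → Fin n, f 0 = i ∧ f (m + 1) = v0 ∧
      wt B f (m + 1) = y B v0 (m + 1) i := by
  intro m
  induction m with
  | zero =>
      intro i
      refine ⟨fun t => if t = 0 then i else v0, by simp, by simp, ?_⟩
      have h1 : wt B (fun t => if t = 0 then i else v0) 1 = B i v0 := by
        simp [wt]
      rw [h1]
      show _ = univ.inf _
      apply le_antisymm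
      · refine Finset.le_inf fun j _ => ?_
        by_cases hj : j = v0
        · subst hj; simp [y]
        · simp [y, hj]
      · have := Finset.inf_le (f := fun j => B i j + y B v0 0 j) (Finset.mem_univ v0)
        simpa [y] using this
  | succ m ih =>
      intro i
      obtain ⟨j, -, hj⟩ := Finset.univ.exists_mem_eq_inf ⟨i, Finset.mem_univ i⟩
        (fun j => B i j + y B v0 (m + 1) j)
      obtain ⟨f, hf0, hfe, hfw⟩ := ih j
      refine ⟨fun t => if t = 0 then i else f (t - 1), by simp, by simpa using hfe, ?_⟩
      have hw : wt B (fun t => if t = 0 then i else f (t - 1)) (m + 2)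
          = B i (f 0) + wt B f (m + 1) := by
        simp only [wt]
        rw [Finset.sum_range_succ' (fun k =>
          B (if k = 0 then i else f (k - 1)) (if k + 1 = 0 then i else f (k + 1 - 1))) (m + 1)]
        simp only [Nat.add_sub_cancel, if_neg (Nat.succ_ne_zero _), Nat.succ_sub_one]
        rw [add_comm]
        simp
      rw [hw, hfw, hf0]
      show _ = univ.inf _
      rw [hj]

/-- splitting off a cycle from a walk. -/
lemma wt_split (B : Matrix (Fin n) (Fin n) (WithTop ℝ)) (f : ℕ → Fin n) (k c r : ℕ)
    (hc : 1 ≤ c) (hcyc : f (k + c) = f k) :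
    wt B f (k + c + r) = wt B (fun t => if t ≤ k then f t else f (t + c)) (k + r)
      + wt B (fun t => f (k + t)) c := by
  set g : ℕ → Fin n := fun t => if t ≤ k then f t else f (t + c) with hg
  have e1 : ∀ t < k, B (g t) (g (t + 1)) = B (f t) (f (t + 1)) := by
    intro t ht
    simp only [hg, if_pos (le_of_lt ht), if_pos (Nat.succ_le_of_lt ht)]
  have e2 : ∀ t, B (g (k + t)) (g (k + t + 1)) = B (f (k + c + t)) (f (k + c + t + 1)) := by
    intro t
    have h1 : g (k + t + 1) = f (k + c + t + 1) := by
      simp only [hg]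
      rw [if_neg (by omega)]
      congr 1
      ring
    have h2 : g (k + t) = f (k + c + t) := by
      rcases Nat.eq_zero_or_pos t with h0 | h0
      · subst h0
        simp only [hg, Nat.add_zero, le_refl, if_pos]
        exact hcyc.symm
      · simp only [hg]
        rw [if_neg (by omega)]
        congr 1
        ring
    rw [h1, h2]
  simp only [wt]
  rw [Finset.sum_range_add (fun x => B (f x) (f (x + 1))) (k + c) r,
      Finset.sum_range_add (fun x => B (f x) (f (x + 1))) k c,
      Finset.sum_range_add (fun x => B (g x) (g (x + 1))) k r]
  have h3 : ∑ x ∈ range k, B (g x) (g (x + 1)) = ∑ x ∈ range k, B (f x) (f (x + 1)) :=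
    Finset.sum_congr rfl fun x hx => e1 x (Finset.mem_range.mp hx)
  have h4 : ∑ x ∈ range r, B (g (k + x)) (g (k + x + 1))
      = ∑ x ∈ range r, B (f (k + c + x)) (f (k + c + x + 1)) :=
    Finset.sum_congr rfl fun x _ => e2 x
  rw [h3, h4]
  exact add_right_comm _ _ _

lemma wt_eq (A : Matrix (Fin n) (Fin n) (WithTop ℝ)) (lam : ℝ) (f : ℕ → Fin n) (m : ℕ) :
    wt (Bm A lam) f m = (∑ k ∈ range m, A (f k) (f (k + 1))) + m • ((-lam : ℝ) : WithTop ℝ) := by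
  simp [wt, Bm, Finset.sum_add_distrib]

/-- every closed walk has nonnegative weight in the normalized matrix. -/
lemma cycle_nonneg (A : Matrix (Fin n) (Fin n) (WithTop ℝ)) (lam : ℝ)
    (hmin : IsLeast {w : ℝ | IsCircuitAvg A w} lam) :
    ∀ m, 1 ≤ m → ∀ f : ℕ → Fin n, f m = f 0 → 0 ≤ wt (Bm A lam) f m := by
  intro m
  induction m using Nat.strong_induction_on with
  | _ m ih =>
    intro hm f hclosed
    by_cases hinj : ∀ k l, k < m → l < m → f k = f l → k = l
    · rcases eq_or_ne (∑ k ∈ range m, A (f k) (f (k + 1))) ⊤ with hS | hS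
      · rw [wt_eq, hS]
        simp
      · obtain ⟨r, hr⟩ := WithTop.ne_top_iff_exists.mp hS
        have hmpos : (0 : ℝ) < m := by exact_mod_cast hm
        have hca : IsCircuitAvg A (r / m) := by
          refine ⟨m, f, hm, hclosed, hinj, ?_⟩
          rw [← hr]
          congr 1
          field_simp
        have hle : lam ≤ r / m := hmin.2 hca
        have hrl : (m : ℝ) * lam ≤ r := by
          have := mul_le_mul_of_nonneg_left hle (le_of_lt hmpos)
          rw [mul_div_cancel₀ _ (ne_of_gt hmpos)] at this
          linarith
        rw [wt_eq, ← hr]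
        have hcoe : (m : ℕ) • ((-lam : ℝ) : WithTop ℝ) = (((m : ℝ) * (-lam) : ℝ) : WithTop ℝ) := by
          rw [← WithTop.coe_nsmul]
          congr 1
          simp [nsmul_eq_mul]
        rw [hcoe, ← WithTop.coe_add, ← WithTop.coe_zero, WithTop.coe_le_coe]
        nlinarith
    · push_neg at hinj
      obtain ⟨a, b, ha, hb, hab, hne⟩ := hinj
      have key : ∀ k l : ℕ, k < l → l < m → f k = f l → 0 ≤ wt (Bm A lam) f m := by
        intro k l hkl hlm hfkl
        set c := l - k with hc
        set r := m - l with hrr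
        have hc1 : 1 ≤ c := by omega
        have hr1 : 1 ≤ r := by omega
        have hmeq : m = k + c + r := by omega
        have hcyc : f (k + c) = f l := by congr 1; omega
        rw [hmeq, wt_split (Bm A lam) f k c r hc1 (by rw [hcyc, hfkl])]
        have h1 : 0 ≤ wt (Bm A lam) (fun t => f (k + t)) c := by
          apply ih c (by omega) hc1
          show f (k + c) = f (k + 0)
          rw [hcyc, add_zero, hfkl]
        have h2 : 0 ≤ wt (Bm A lam) (fun t => if t ≤ k then f t else f (t + c)) (k + r) := by
          apply ih (k + r) (by omega) (by omega)
          show (if k + r ≤ k then f (k + r) else f (k + r + c))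
             = (if 0 ≤ k then f 0 else f (0 + c))
          rw [if_neg (by omega), if_pos (Nat.zero_le k)]
          rw [show k + r + c = m by omega, hclosed]
        exact add_nonneg h2 h1
      rcases lt_or_gt_of_ne hne with h | h
      · exact key a b h hb hab
      · exact key b a h ha hab.symm

/-- walks of any positive length are bounded below by the candidate eigenvector. -/
lemma dvec_le_y (A : Matrix (Fin n) (Fin n) (WithTop ℝ)) (lam : ℝ)
    (hmin : IsLeast {w : ℝ | IsCircuitAvg A w} lam) (v0 : Fin n) :
    ∀ m, 1 ≤ m → ∀ i, dvec A lam v0 i ≤ y (Bm A lam) v0 m i := by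
  intro m
  induction m using Nat.strong_induction_on with
  | _ m ih =>
    intro hm i
    rcases le_or_gt m n with hmn | hmn
    · exact Finset.inf_le (Finset.mem_Icc.mpr ⟨hm, hmn⟩)
    · obtain ⟨m', rfl⟩ : ∃ m', m = m' + 1 := ⟨m - 1, by omega⟩
      obtain ⟨f, hf0, hfe, hfw⟩ := y_attained (Bm A lam) v0 m' i
      obtain ⟨a, b, hne, hab⟩ := Fintype.exists_ne_map_eq_of_card_lt
        (fun t : Fin (n + 1) => f t) (by simp)
      have key : ∀ k l : ℕ, k < l → l ≤ n → f k = f l →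
          dvec A lam v0 i ≤ y (Bm A lam) v0 (m' + 1) i := by
        intro k l hkl hln hfkl
        set c := l - k with hcd
        set r := m' + 1 - l with hrd
        have hc1 : 1 ≤ c := by omega
        have hr1 : 1 ≤ r := by omega
        have hmeq : m' + 1 = k + c + r := by omega
        have hcyc : f (k + c) = f k := by rw [show k + c = l by omega, hfkl]
        set g : ℕ → Fin n := fun t => if t ≤ k then f t else f (t + c) with hgd
        have hsplit := wt_split (Bm A lam) f k c r hc1 hcyc
        have hcyc0 : 0 ≤ wt (Bm A lam) (fun t => f (k + t)) c := by
          apply cycle_nonneg A lam hmin c hc1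
          show f (k + c) = f (k + 0)
          rw [hcyc, add_zero]
        have hg0 : g 0 = i := by
          show (if 0 ≤ k then f 0 else f (0 + c)) = i
          rw [if_pos (Nat.zero_le k), hf0]
        have hge : g (k + r) = v0 := by
          show (if k + r ≤ k then f (k + r) else f (k + r + c)) = v0
          rw [if_neg (by omega), show k + r + c = m' + 1 by omega, hfe]
        have hwg : y (Bm A lam) v0 (k + r) i ≤ wt (Bm A lam) g (k + r) := by
          have := y_le_wt (Bm A lam) v0 (k + r) g hge
          rwa [hg0] at this
        calc dvec A lam v0 i ≤ y (Bm A lam) v0 (k + r) i := ih (k + r) (by omega) (by omega) i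
          _ ≤ wt (Bm A lam) g (k + r) := hwg
          _ ≤ wt (Bm A lam) g (k + r) + wt (Bm A lam) (fun t => f (k + t)) c :=
              le_add_of_nonneg_right hcyc0
          _ = wt (Bm A lam) f (m' + 1) := by rw [hmeq, hsplit]
          _ = y (Bm A lam) v0 (m' + 1) i := hfw
      rcases lt_or_gt_of_ne hne with h | h
      · exact key a b (by exact_mod_cast h) b.is_le hab
      · exact key b a (by exact_mod_cast h) a.is_le hab.symm

end MinPlusAux

open MinPlusAux in
/-- If the network of `A` contains at least one circuit, then the minimum of
the average weights of circuits is a min-plus eigenvalue of `A`: there is a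
vector `x`, not all of whose entries are `+∞`, with `A ⊗ x = λ ⊗ x`. -/
theorem minplus_min_circuit_avg_is_eigenvalue {n : ℕ}
    (A : Matrix (Fin n) (Fin n) (WithTop ℝ)) (lam : ℝ)
    (hmin : IsLeast {w : ℝ | IsCircuitAvg A w} lam) :
    ∃ x : Fin n → WithTop ℝ, (∃ i, x i ≠ ⊤) ∧
      ∀ i, Finset.univ.inf (fun j => A i j + x j) = (lam : WithTop ℝ) + x i := by
  obtain ⟨s, f0, hs, hcl, hinj, hsum⟩ := hmin.1
  set v0 : Fin n := f0 0 with hv0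
  set B := Bm A lam with hB
  set d : Fin n → WithTop ℝ := dvec A lam v0 with hd
  have hsn : s ≤ n := by
    have : Function.Injective (fun t : Fin s => f0 t) := by
      intro a b h
      exact Fin.ext (hinj a b a.2 b.2 h)
    simpa using Fintype.card_le_of_injective _ this
  have hn1 : 1 ≤ n := le_trans hs hsn
  have hwt0 : wt B f0 s = 0 := by
    rw [hB, wt_eq, hsum]
    have hcoe : (s : ℕ) • ((-lam : ℝ) : WithTop ℝ) = (((s : ℝ) * (-lam) : ℝ) : WithTop ℝ) := by
      rw [← WithTop.coe_nsmul]
      congr 1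
      simp [nsmul_eq_mul]
    rw [hcoe, ← WithTop.coe_add, ← WithTop.coe_zero]
    congr 1
    ring
  have hd0 : d v0 ≤ 0 := by
    calc d v0 ≤ y B v0 s v0 := Finset.inf_le (Finset.mem_Icc.mpr ⟨hs, hsn⟩)
      _ ≤ wt B f0 s := by
          have := y_le_wt B v0 s f0 (by rw [hcl])
          rwa [← hv0] at this
      _ = 0 := hwt0
  have eigeq : ∀ i, univ.inf (fun j => B i j + d j) = d i := by
    intro i
    apply le_antisymm
    · obtain ⟨m, hmIcc, hmy⟩ := (Icc 1 n).exists_mem_eq_inf ⟨1, Finset.mem_Icc.mpr ⟨le_refl 1, hn1⟩⟩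
        (fun m => y B v0 m i)
      rw [Finset.mem_Icc] at hmIcc
      obtain ⟨m', rfl⟩ : ∃ m', m = m' + 1 := ⟨m - 1, by omega⟩
      obtain ⟨f, hf0, hfe, hfw⟩ := y_attained B v0 m' i
      have hshift : wt B f (m' + 1) = B i (f 1) + wt B (fun t => f (t + 1)) m' := by
        simp only [wt, Finset.sum_range_succ' (fun k => B (f k) (f (k + 1))) m']
        rw [add_comm, hf0]
      have hd1 : d (f 1) ≤ wt B (fun t => f (t + 1)) m' := by
        rcases Nat.eq_zero_or_pos m' with h0 | h0
        · subst h0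
          have hfv : f 1 = v0 := hfe
          have : wt B (fun t => f (t + 1)) 0 = 0 := by simp [wt]
          rw [this, hfv]
          exact hd0
        · calc d (f 1) ≤ y B v0 m' (f 1) :=
                Finset.inf_le (Finset.mem_Icc.mpr ⟨h0, by omega⟩)
            _ ≤ wt B (fun t => f (t + 1)) m' := by
                have := y_le_wt B v0 m' (fun t => f (t + 1)) hfe
                simpa using this
      calc univ.inf (fun j => B i j + d j) ≤ B i (f 1) + d (f 1) :=
            Finset.inf_le (Finset.mem_univ (f 1))
        _ ≤ B i (f 1) + wt B (fun t => f (t + 1)) m' := add_le_add_right hd1 _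
        _ = wt B f (m' + 1) := hshift.symm
        _ = y B v0 (m' + 1) i := hfw
        _ = d i := by rw [hd, dvec, ← hmy]
    · apply Finset.le_inf
      intro j _
      obtain ⟨m, hmIcc, hmy⟩ := (Icc 1 n).exists_mem_eq_inf ⟨1, Finset.mem_Icc.mpr ⟨le_refl 1, hn1⟩⟩
        (fun m => y B v0 m j)
      rw [Finset.mem_Icc] at hmIcc
      have h1 : y B v0 (m + 1) i ≤ B i j + y B v0 m j := Finset.inf_le (Finset.mem_univ j)
      have h2 : d i ≤ y B v0 (m + 1) i := dvec_le_y A lam hmin v0 (m + 1) (by omega) i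
      calc d i ≤ B i j + y B v0 m j := le_trans h2 h1
        _ = B i j + d j := by rw [hd, dvec, ← hmy]
  refine ⟨d, ⟨v0, ?_⟩, ?_⟩
  · intro h
    rw [h] at hd0
    exact absurd hd0 (by simp)
  · intro i
    have key : ∀ j, A i j + d j = (lam : WithTop ℝ) + (B i j + d j) := by
      intro j
      rw [← add_assoc]
      congr 1
      show A i j = (lam : WithTop ℝ) + (A i j + ((-lam : ℝ) : WithTop ℝ))
      rw [add_comm (A i j), ← add_assoc, ← WithTop.coe_add]
      norm_num
    calc univ.inf (fun j => A i j + d j)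
        = univ.inf (fun j => (lam : WithTop ℝ) + (B i j + d j)) := by
          exact Finset.inf_congr rfl fun j _ => key j
      _ = (lam : WithTop ℝ) + univ.inf (fun j => B i j + d j) :=
          inf_const_add _ _ ⟨v0, Finset.mem_univ v0⟩ _
      _ = (lam : WithTop ℝ) + d i := by rw [eigeq i]
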